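/- For every solution X of the truncated tree model on [0,T], the kinetic energy E(t) = ∑_{j ∈ J} X_j(t)² is constant in time: E(t) = E(0) for all t ∈ [0,T]. -/

import Mathlib

/-- The offspring set `O_j = {k ≠ root : parent k = j}` of a node in a finite eddy tree. -/
def offspring {J : Type*} [Fintype J] [DecidableEq J] (root : J) (parent : J → J)
    (j : J) : Finset J :=
  Finset.univ.filter fun k => k ≠ root ∧ parent k = j

/-- A solution of the truncated tree model on `[0,T]`:
`X_j' = α (c_j X_{\bar j}² − ∑_{k ∈ O_j} c_k X_j X_k)
      − β (d_{\bar j} X_{\bar j} X_j − ∑_{k ∈ O_j} d_j X_k²)`. -/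
def IsTreeSolution {J : Type*} [Fintype J] [DecidableEq J] (root : J) (parent : J → J)
    (α β : ℝ) (c d : J → ℝ) (T : ℝ) (X : ℝ → J → ℝ) : Prop :=
  ∀ j : J, ∀ t ∈ Set.Icc (0 : ℝ) T,
    HasDerivWithinAt (fun u => X u j)
      (α * (c j * (X t (parent j)) ^ 2
          - ∑ k ∈ offspring root parent j, c k * X t j * X t k)
        - β * (d (parent j) * X t (parent j) * X t j
          - ∑ k ∈ offspring root parent j, d j * (X t k) ^ 2))
      (Set.Icc (0 : ℝ) T) t

lemma tree_key_sum {J : Type*} [Fintype J] [DecidableEq J]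
    (root : J) (parent : J → J)
    (α β : ℝ) (c d : J → ℝ)
    (hparent_root : parent root = root)
    (hc_root : c root = 0) (hd_root : d root = 0)
    (A : J → ℝ) :
    ∑ j : J, 2 * A j *
      (α * (c j * (A (parent j)) ^ 2
          - ∑ k ∈ offspring root parent j, c k * A j * A k)
        - β * (d (parent j) * A (parent j) * A j
          - ∑ k ∈ offspring root parent j, d j * (A k) ^ 2)) = 0 := by
  have hmem : ∀ j k, k ∈ offspring root parent j → parent k = j := by
    intro j k hk
    simp only [offspring, Finset.mem_filter] at hk
    exact hk.2.2
  have expand : ∀ j : J, 2 * A j *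
      (α * (c j * (A (parent j)) ^ 2
          - ∑ k ∈ offspring root parent j, c k * A j * A k)
        - β * (d (parent j) * A (parent j) * A j
          - ∑ k ∈ offspring root parent j, d j * (A k) ^ 2))
      = (2 * α * c j * A (parent j) ^ 2 * A j - 2 * β * d (parent j) * A (parent j) * A j ^ 2)
        + ∑ k ∈ offspring root parent j,
            (2 * β * d (parent k) * A (parent k) * A k ^ 2
              - 2 * α * c k * A (parent k) ^ 2 * A k) := by
    intro j
    have hS : ∑ k ∈ offspring root parent j,
        (2 * β * d (parent k) * A (parent k) * A k ^ 2
          - 2 * α * c k * A (parent k) ^ 2 * A k)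
        = 2 * A j * β * (∑ k ∈ offspring root parent j, d j * (A k) ^ 2)
          - 2 * A j * α * (∑ k ∈ offspring root parent j, c k * A j * A k) := by
      rw [Finset.mul_sum, Finset.mul_sum, ← Finset.sum_sub_distrib]
      refine Finset.sum_congr rfl fun k hk => ?_
      rw [hmem j k hk]; ring
    rw [hS]; ring
  rw [Finset.sum_congr rfl fun j _ => expand j, Finset.sum_add_distrib]
  have hoff : ∀ j, offspring root parent j
      = (Finset.univ.filter (fun k => k ≠ root)).filter (fun k => parent k = j) := by
    intro j; ext k
    simp [offspring, and_comm]
  have hfib : ∑ j : J, ∑ k ∈ offspring root parent j,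
      (2 * β * d (parent k) * A (parent k) * A k ^ 2
        - 2 * α * c k * A (parent k) ^ 2 * A k)
      = ∑ k ∈ Finset.univ.filter (fun k => k ≠ root),
          (2 * β * d (parent k) * A (parent k) * A k ^ 2
            - 2 * α * c k * A (parent k) ^ 2 * A k) := by
    simp only [hoff]
    exact Finset.sum_fiberwise_of_maps_to (fun k _ => Finset.mem_univ (parent k)) _
  rw [hfib, Finset.sum_filter_of_ne (f := fun k =>
      2 * β * d (parent k) * A (parent k) * A k ^ 2
        - 2 * α * c k * A (parent k) ^ 2 * A k)
    (fun k _ hne => by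
      intro hk
      exact hne (by rw [hk, hparent_root, hc_root, hd_root]; ring))]
  rw [← Finset.sum_add_distrib]
  apply Finset.sum_eq_zero
  intro j _
  ring

/-- for every solution of the truncated tree model on `[0,T]`, the kinetic
energy `E(t) = ∑_{j ∈ J} X_j(t)²` is constant in time. -/
theorem tree_energy_conservation {J : Type*} [Fintype J] [DecidableEq J]
    (root : J) (parent : J → J) (gen : J → ℕ)
    (hparent_root : parent root = root) (hgen_root : gen root = 0)
    (hgen : ∀ j, j ≠ root → gen j = gen (parent j) + 1)
    (α β : ℝ) (c d : J → ℝ)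
    (hc_root : c root = 0) (hd_root : d root = 0)
    (hconserv : ∀ j, j ≠ root → α * c j - β * d j = 0)
    (T : ℝ) (hT : 0 < T) (X : ℝ → J → ℝ)
    (hX : IsTreeSolution root parent α β c d T X) :
    ∀ t ∈ Set.Icc (0 : ℝ) T, ∑ j : J, (X t j) ^ 2 = ∑ j : J, (X 0 j) ^ 2 := by
  have hE : ∀ s ∈ Set.Icc (0 : ℝ) T,
      HasDerivWithinAt (fun u => ∑ j : J, (X u j) ^ 2) 0 (Set.Icc (0 : ℝ) T) s := by
    intro s hs
    have h : HasDerivWithinAt (fun u => ∑ j : J, (X u j) ^ 2)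
        (∑ j : J, (2 : ℝ) * X s j *
          (α * (c j * (X s (parent j)) ^ 2
              - ∑ k ∈ offspring root parent j, c k * X s j * X s k)
            - β * (d (parent j) * X s (parent j) * X s j
              - ∑ k ∈ offspring root parent j, d j * (X s k) ^ 2)))
        (Set.Icc (0 : ℝ) T) s := by
      refine HasDerivWithinAt.fun_sum fun j _ => ?_
      have h2 := (hX j s hs).pow 2
      norm_num at h2
      exact h2
    rwa [tree_key_sum root parent α β c d hparent_root hc_root hd_root (X s)] at h
  have hcont : ContinuousOn (fun u => ∑ j : J, (X u j) ^ 2) (Set.Icc (0 : ℝ) T) :=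
    fun s hs => (hE s hs).continuousWithinAt
  have hright : ∀ s ∈ Set.Ico (0 : ℝ) T,
      HasDerivWithinAt (fun u => ∑ j : J, (X u j) ^ 2) 0 (Set.Ici s) s := by
    intro s hs
    exact (hE s (Set.Ico_subset_Icc_self hs)).mono_of_mem_nhdsWithin (Icc_mem_nhdsGE_of_mem hs)
  intro t ht
  exact constant_of_has_deriv_right_zero hcont hright t ht
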